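/- Let V be a Q-algebra, let k, n be positive integers, and let π₀, …, πₙ ∈ V be idempotents such that πᵢ·πⱼ = 0 whenever i ≠ j and i − j < k. For each i define pᵢ := (1 − (1/2)πₙ) ⋯ (1 − (1/2)π_{i+1}) · πᵢ · (1 − (1/2)π_{i−1}) ⋯ (1 − (1/2)π₀). Then each pᵢ is an idempotent, and pᵢ·pⱼ = 0 whenever i ≠ j and i − j < k + 1. -/
import Mathlib

/-- `(1 - (1/2)πₙ) ⋯ (1 - (1/2)π_{i+1}) · πᵢ · (1 - (1/2)π_{i-1}) ⋯ (1 - (1/2)π₀)` -/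
def gramSchmidtStep {V : Type*} [Ring V] [Algebra ℚ V] (n : ℕ) (π : ℕ → V) (i : ℕ) : V :=
  (((List.range (n - i)).map (fun t => 1 - (2:ℚ)⁻¹ • π (n - t))).prod) * π i *
    (((List.range i).reverse.map (fun t => 1 - (2:ℚ)⁻¹ • π t)).prod)

section GSAux

variable {V : Type*} [Ring V] [Algebra ℚ V]

/-- `1 - (1/2) π t` -/
def gsq (π : ℕ → V) (t : ℕ) : V := 1 - (2:ℚ)⁻¹ • π t

/-- The descending product `q (a+m-1) * ⋯ * q a`. -/
def gsP (π : ℕ → V) (a : ℕ) : ℕ → V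
  | 0 => 1
  | m+1 => gsq π (a+m) * gsP π a m

lemma gsP_succ' (π : ℕ → V) (a m : ℕ) : gsP π a (m+1) = gsP π (a+1) m * gsq π a := by
  induction m with
  | zero => simp [gsP]
  | succ m ih =>
      show gsq π (a+(m+1)) * gsP π a (m+1) = gsP π (a+1) (m+1) * gsq π a
      rw [ih]
      show gsq π (a+(m+1)) * (gsP π (a+1) m * gsq π a) = gsq π ((a+1)+m) * gsP π (a+1) m * gsq π a
      rw [mul_assoc]
      congr 2
      omega

lemma gsP_split (π : ℕ → V) (a l m : ℕ) : gsP π a (m+l) = gsP π (a+l) m * gsP π a l := by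
  induction m with
  | zero => simp [gsP]
  | succ m ih =>
      have e1 : m+1+l = (m+l)+1 := by omega
      rw [e1]
      show gsq π (a+(m+l)) * gsP π a (m+l) = gsq π ((a+l)+m) * gsP π (a+l) m * gsP π a l
      rw [ih, mul_assoc]
      congr 2
      omega

lemma gsP_mul (π : ℕ → V) (a m c : ℕ) (h : ∀ t, a ≤ t → t < a+m → π t * π c = 0) :
    gsP π a m * π c = π c := by
  induction m with
  | zero => simp [gsP]
  | succ m ih =>
      show gsq π (a+m) * gsP π a m * π c = π c
      rw [mul_assoc, ih (fun t h1 h2 => h t h1 (by omega)), gsq, sub_mul, one_mul,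
        smul_mul_assoc, h (a+m) (by omega) (by omega)]
      simp

lemma mul_gsP (π : ℕ → V) (a m c : ℕ) (h : ∀ t, a ≤ t → t < a+m → π c * π t = 0) :
    π c * gsP π a m = π c := by
  induction m generalizing a with
  | zero => simp [gsP]
  | succ m ih =>
      rw [gsP_succ', ← mul_assoc, ih (a+1) (fun t h1 h2 => h t (by omega) (by omega)),
        gsq, mul_sub, mul_one, mul_smul_comm, h a (by omega) (by omega)]
      simp

lemma gsP_junction (π : ℕ → V) (a m b l : ℕ)
    (h : ∀ s t, a ≤ s → s < a+m → b ≤ t → t < b+l → π s * π t = 0) :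
    gsP π a m * gsP π b l = gsP π a m + gsP π b l - 1 := by
  induction m with
  | zero => show (1:V) * _ = 1 + _ - 1; rw [one_mul]; abel
  | succ m ih =>
      show gsq π (a+m) * gsP π a m * gsP π b l = gsq π (a+m) * gsP π a m + gsP π b l - 1
      rw [mul_assoc, ih (fun s t h1 h2 h3 h4 => h s t h1 (by omega) h3 h4), mul_sub, mul_add,
        mul_one]
      have h2 : gsq π (a+m) * gsP π b l = gsP π b l - (2:ℚ)⁻¹ • π (a+m) := by
        rw [gsq, sub_mul, one_mul, smul_mul_assoc,
          mul_gsP π b l (a+m) (fun t h1 h2 => h (a+m) t (by omega) (by omega) h1 h2)]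
      rw [h2, gsq]
      abel

lemma gs_right (π : ℕ → V) (i : ℕ) :
    ((List.range i).reverse.map (fun t => 1 - (2:ℚ)⁻¹ • π t)).prod = gsP π 0 i := by
  induction i with
  | zero => simp [gsP]
  | succ i ih =>
      rw [List.range_succ, List.reverse_append, List.map_append, List.prod_append]
      simp only [List.reverse_singleton, List.map_cons, List.map_nil, List.prod_cons,
        List.prod_nil, mul_one]
      rw [ih]
      show gsq π i * gsP π 0 i = gsP π 0 (i+1)
      rw [show gsP π 0 (i+1) = gsq π (0+i) * gsP π 0 i from rfl, Nat.zero_add]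

lemma gs_left (π : ℕ → V) (b : ℕ) :
    ∀ m, m ≤ b+1 → ((List.range m).map (fun t => 1 - (2:ℚ)⁻¹ • π (b - t))).prod
      = gsP π (b+1-m) m := by
  intro m
  induction m with
  | zero => simp [gsP]
  | succ m ih =>
      intro hm
      rw [List.range_succ, List.map_append, List.prod_append]
      simp only [List.map_cons, List.map_nil, List.prod_cons, List.prod_nil, mul_one]
      rw [ih (by omega)]
      show gsP π (b+1-m) m * gsq π (b-m) = gsP π (b+1-(m+1)) (m+1)
      rw [show b+1-(m+1) = b-m by omega, gsP_succ' π (b-m) m, show b-m+1 = b+1-m by omega]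

lemma gs_eq (π : ℕ → V) (n i : ℕ) (hin : i ≤ n) :
    gramSchmidtStep n π i = gsP π (i+1) (n-i) * π i * gsP π 0 i := by
  unfold gramSchmidtStep
  rw [gs_right, gs_left π n (n-i) (by omega), show n+1-(n-i) = i+1 by omega]

lemma gs_key_idem (a R L : V) (ha : a*a = a) (hRa : R*a = a) (haL : a*L = a)
    (hRL : R*L = R+L-1) : (L*a*R)*(L*a*R) = L*a*R := by
  have ha' : ∀ x : V, a*(a*x) = a*x := fun x => by rw [← mul_assoc, ha]
  have hRa' : ∀ x : V, R*(a*x) = a*x := fun x => by rw [← mul_assoc, hRa]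
  have haL' : ∀ x : V, a*(L*x) = a*x := fun x => by rw [← mul_assoc, haL]
  have hRL' : ∀ x : V, R*(L*x) = R*x + L*x - x := fun x => by
    rw [← mul_assoc, hRL, sub_mul, add_mul, one_mul]
  simp only [mul_assoc, hRL', mul_add, mul_sub, add_mul, sub_mul, ha', hRa', haL', one_mul, mul_one]
  abel

lemma gs_key_lt (a b R L X z : V) (hab : a*b = 0) (hRb : R*b = b) (haL : a*L = a)
    (hRL : R*L = R+L-1) : (X*a*R)*(L*b*z) = 0 := by
  have hRb' : ∀ x : V, R*(b*x) = b*x := fun x => by rw [← mul_assoc, hRb]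
  have haL' : ∀ x : V, a*(L*x) = a*x := fun x => by rw [← mul_assoc, haL]
  have hab' : ∀ x : V, a*(b*x) = 0 := fun x => by rw [← mul_assoc, hab, zero_mul]
  have hRL' : ∀ x : V, R*(L*x) = R*x + L*x - x := fun x => by
    rw [← mul_assoc, hRL, sub_mul, add_mul, one_mul]
  have inner : a*(R*(L*(b*z))) = 0 := by
    simp only [mul_assoc, hRL', mul_add, mul_sub, hRb', haL', hab', mul_zero, zero_mul]
    abel
  calc (X*a*R)*(L*b*z) = X*(a*(R*(L*(b*z)))) := by simp only [mul_assoc]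
    _ = 0 := by rw [inner, mul_zero]

lemma gs_key_orth (a b M R L z : V)
    (ha : a*a=a) (hb : b*b=b) (hba : b*a=0)
    (haM : a*M=a) (hMb : M*b=b)
    (hRb : R*b=b) (hRa : R*a=a) (haL : a*L=a) (hbL : b*L=b)
    (hRL : R*L = R+L-1) :
    a * (M * ((1 - (2:ℚ)⁻¹ • b) * (R * (L * ((1 - (2:ℚ)⁻¹ • a) * (M * (b * z))))))) = 0 := by
  have ha' : ∀ x : V, a*(a*x) = a*x := fun x => by rw [← mul_assoc, ha]
  have hb' : ∀ x : V, b*(b*x) = b*x := fun x => by rw [← mul_assoc, hb]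
  have hba' : ∀ x : V, b*(a*x) = 0 := fun x => by rw [← mul_assoc, hba, zero_mul]
  have haM' : ∀ x : V, a*(M*x) = a*x := fun x => by rw [← mul_assoc, haM]
  have hMb' : ∀ x : V, M*(b*x) = b*x := fun x => by rw [← mul_assoc, hMb]
  have hRb' : ∀ x : V, R*(b*x) = b*x := fun x => by rw [← mul_assoc, hRb]
  have hRa' : ∀ x : V, R*(a*x) = a*x := fun x => by rw [← mul_assoc, hRa]
  have haL' : ∀ x : V, a*(L*x) = a*x := fun x => by rw [← mul_assoc, haL]
  have hbL' : ∀ x : V, b*(L*x) = b*x := fun x => by rw [← mul_assoc, hbL]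
  have hRL' : ∀ x : V, R*(L*x) = R*x + L*x - x := fun x => by
    rw [← mul_assoc, hRL, sub_mul, add_mul, one_mul]
  simp only [mul_assoc, sub_mul, mul_sub, add_mul, mul_add, one_mul, mul_one,
    smul_mul_assoc, mul_smul_comm, smul_smul, hRL',
    ha', hb', hba', haM', hMb', hRb', hRa', haL', hbL',
    ha, hb, hba, haM, hMb, hRb, hRa, haL, hbL, mul_zero, zero_mul, smul_zero]
  module

end GSAux

theorem gram_schmidt_lemma {V : Type*} [Ring V] [Algebra ℚ V]
    (k n : ℕ) (hk : 0 < k) (hn : 0 < n) (π : ℕ → V)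
    (hidem : ∀ i ≤ n, π i * π i = π i)
    (horth : ∀ i ≤ n, ∀ j ≤ n, i ≠ j → (i : ℤ) - j < k → π i * π j = 0) :
    (∀ i ≤ n, gramSchmidtStep n π i * gramSchmidtStep n π i = gramSchmidtStep n π i) ∧
    (∀ i ≤ n, ∀ j ≤ n, i ≠ j → (i : ℤ) - j < k + 1 →
      gramSchmidtStep n π i * gramSchmidtStep n π j = 0) := by
  constructor
  · intro i hi
    rw [gs_eq π n i hi]
    exact gs_key_idem (π i) (gsP π 0 i) (gsP π (i+1) (n-i))
      (hidem i hi)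
      (gsP_mul π 0 i i (fun t h1 h2 => horth t (by omega) i hi (by omega) (by omega)))
      (mul_gsP π (i+1) (n-i) i (fun t h1 h2 => horth i hi t (by omega) (by omega) (by omega)))
      (gsP_junction π 0 i (i+1) (n-i)
        (fun s t h1 h2 h3 h4 => horth s (by omega) t (by omega) (by omega) (by omega)))
  · intro i hi j hj hne hlt
    rw [gs_eq π n i hi, gs_eq π n j hj]
    rcases Nat.lt_or_ge i j with hij | hij
    · -- i < j : easy case
      exact gs_key_lt (π i) (π j) (gsP π 0 i) (gsP π (j+1) (n-j)) _ _
        (horth i hi j hj hne (by omega))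
        (gsP_mul π 0 i j (fun t h1 h2 => horth t (by omega) j hj (by omega) (by omega)))
        (mul_gsP π (j+1) (n-j) i (fun t h1 h2 => horth i hi t (by omega) (by omega) (by omega)))
        (gsP_junction π 0 i (j+1) (n-j)
          (fun s t h1 h2 h3 h4 => horth s (by omega) t (by omega) (by omega) (by omega)))
    · -- j < i : hard case
      have hji : j < i := by omega
      set a := π i with ha_def
      set b := π j with hb_def
      set M : V := gsP π (j+1) (i-j-1) with hM_def
      set Rj : V := gsP π 0 j with hRj_def
      set Li : V := gsP π (i+1) (n-i) with hLi_def
      have hRi : gsP π 0 i = M * (gsq π j * Rj) := by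
        have h1 := gsP_split π 0 (j+1) (i-j-1)
        rw [show (i-j-1)+(j+1) = i by omega, Nat.zero_add] at h1
        rw [h1]
        congr 1
        show gsq π (0+j) * gsP π 0 j = gsq π j * Rj
        rw [Nat.zero_add, hRj_def]
      have hLj : gsP π (j+1) (n-j) = Li * (gsq π i * M) := by
        have h1 := gsP_split π (j+1) (i-j) (n-i)
        rw [show (n-i)+(i-j) = n-j by omega, show (j+1)+(i-j) = i+1 by omega] at h1
        rw [h1, hLi_def]
        congr 1
        rw [show i-j = (i-j-1)+1 by omega]
        show gsq π ((j+1)+(i-j-1)) * gsP π (j+1) (i-j-1) = gsq π i * M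
        rw [show (j+1)+(i-j-1) = i by omega, hM_def]
      have inner : a * (M * (gsq π j * (Rj * (Li * (gsq π i * (M * (b * Rj))))))) = 0 := by
        rw [gsq, gsq]
        exact gs_key_orth a b M Rj Li Rj
          (hidem i hi) (hidem j hj)
          (horth j hj i hi (by omega) (by omega))
          (mul_gsP π (j+1) (i-j-1) i (fun t h1 h2 => horth i hi t (by omega) (by omega) (by omega)))
          (gsP_mul π (j+1) (i-j-1) j (fun t h1 h2 => horth t (by omega) j hj (by omega) (by omega)))
          (gsP_mul π 0 j j (fun t h1 h2 => horth t (by omega) j hj (by omega) (by omega)))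
          (gsP_mul π 0 j i (fun t h1 h2 => horth t (by omega) i hi (by omega) (by omega)))
          (mul_gsP π (i+1) (n-i) i (fun t h1 h2 => horth i hi t (by omega) (by omega) (by omega)))
          (mul_gsP π (i+1) (n-i) j (fun t h1 h2 => horth j hj t (by omega) (by omega) (by omega)))
          (gsP_junction π 0 j (i+1) (n-i)
            (fun s t h1 h2 h3 h4 => horth s (by omega) t (by omega) (by omega) (by omega)))
      calc (Li * a * gsP π 0 i) * (gsP π (j+1) (n-j) * b * Rj)
          = Li * (a * (M * (gsq π j * (Rj * (Li * (gsq π i * (M * (b * Rj)))))))) := by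
            rw [hRi, hLj]; simp only [mul_assoc]
        _ = 0 := by rw [inner, mul_zero]
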